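/- arXiv:2409.11780 — 2 statements merged into one kernel-verified Lean document; each statement's English description precedes it below -/
import Mathlib

section
/- The Elitist set comparison ⊲_Eli is transitive on finite sets when the underlying preorder ≤ is a preorder: if Γ ⊲_Eli Γ' and Γ' ⊲_Eli Γ'', then Γ ⊲_Eli Γ''. -/
def Eli {P : Type*} [Preorder P] (Γ Γ' : Finset P) : Prop :=
  Γ ≠ ∅ ∧ (Γ' = ∅ ∨ ∃ X ∈ Γ, ∀ Y ∈ Γ', X < Y)

theorem eli_trans {P : Type*} [Preorder P] (Γ Γ' Γ'' : Finset P)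
    (h1 : Eli Γ Γ') (h2 : Eli Γ' Γ'') : Eli Γ Γ'' := by
  obtain ⟨hΓ, h1⟩ := h1
  obtain ⟨hΓ', h2⟩ := h2
  refine ⟨hΓ, ?_⟩
  rcases h2 with h2 | ⟨X', hX', hlt'⟩
  · exact Or.inl h2
  rcases h1 with h1 | ⟨X, hX, hlt⟩
  · exact absurd h1 hΓ'
  exact Or.inr ⟨X, hX, fun Y hY => (hlt X' hX').trans (hlt' Y hY)⟩
end

section
/- The argument preference ordering ≺ induced by the Elitist comparison on last principles is a strict order: it is irreflexive and transitive. -/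
def Prec {Arg P : Type*} [Preorder P] (LastPrin : Arg → Finset P) (A B : Arg) : Prop :=
  Eli (LastPrin B) (LastPrin A)

theorem prec_strict_order {Arg P : Type*} [Preorder P] (LastPrin : Arg → Finset P) :
    (∀ A, ¬ Prec LastPrin A A) ∧
    (∀ A B C, Prec LastPrin A B → Prec LastPrin B C → Prec LastPrin A C) := by
  constructor
  · rintro A ⟨hne, h | ⟨X, hX, hlt⟩⟩
    · exact hne h
    · exact lt_irrefl X (hlt X hX)
  · rintro A B C ⟨hBne, hAB⟩ ⟨hCne, hBC⟩
    refine ⟨hCne, ?_⟩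
    rcases hBC with hBemp | ⟨X, hX, hlt⟩
    · exact absurd hBemp hBne
    rcases hAB with hAemp | ⟨X', hX', hlt'⟩
    · exact Or.inl hAemp
    · exact Or.inr ⟨X, hX, fun Y hY => lt_trans (hlt X' hX') (hlt' Y hY)⟩
end
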